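/- For fixed positive integers a, b, j: the image of the map N_j : brew(j,a+b) × SH(a,b) → ℕ₀^{j×(a+b)}, (U,P) ↦ UP, equals the disjoint union over u₁, u₂ ∈ ℕ of the images of the maps M_{u₁,u₂,j} : QSH(u₁,u₂;j) × brew(u₁,a) × brew(u₂,b) → ℕ₀^{j×(a+b)}, (A,U₁,U₂) ↦ A·diag(U₁,U₂). -/

import Mathlib

/-- `IsBrew M`: `M` is the one-hot matrix encoding of a composition, i.e. its columns are
standard basis vectors `e_{ι j}` with `ι` weakly increasing, surjective, and with
consecutive increments at most `1`. -/
def IsBrew {v ℓ : ℕ} (M : Matrix (Fin v) (Fin ℓ) ℕ) : Prop :=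
  ∃ ι : Fin ℓ → Fin v, Monotone ι ∧ Function.Surjective ι ∧
    (∀ (j : ℕ) (h : j + 1 < ℓ),
      ((ι ⟨j + 1, h⟩ : Fin v) : ℕ) ≤ ((ι ⟨j, Nat.lt_of_succ_lt h⟩ : Fin v) : ℕ) + 1) ∧
    M = Matrix.of fun i j => if i = ι j then 1 else 0

/-- `IsQSH M` (for `M` of size `j × (m+s)`): the columns of `M` are standard basis vectors
`e_{ι₁},…,e_{ι_m},e_{κ₁},…,e_{κ_s}` with `ι` and `κ` strictly increasing, and `M` is right
invertible (every standard basis vector occurs as a column). -/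
def IsQSH {m s j : ℕ} (M : Matrix (Fin j) (Fin (m + s)) ℕ) : Prop :=
  ∃ ι : Fin m → Fin j, ∃ κ : Fin s → Fin j, StrictMono ι ∧ StrictMono κ ∧
    Function.Surjective (Sum.elim ι κ) ∧
    M = Matrix.of fun r c =>
      Sum.elim (fun p => if r = ι p then 1 else 0) (fun q => if r = κ q then 1 else 0)
        (finSumFinEquiv.symm c)

/-- `IsSH M`: `M` is a shuffle permutation matrix
`[e_{ι₁} ⋯ e_{ι_a} e_{κ₁} ⋯ e_{κ_b}]` with `ι`, `κ` strictly increasing. -/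
def IsSH {a b : ℕ} (M : Matrix (Fin (a + b)) (Fin (a + b)) ℕ) : Prop :=
  ∃ ι : Fin a → Fin (a + b), ∃ κ : Fin b → Fin (a + b), StrictMono ι ∧ StrictMono κ ∧
    Function.Bijective (Sum.elim ι κ) ∧
    M = Matrix.of fun r c =>
      Sum.elim (fun p => if r = ι p then 1 else 0) (fun q => if r = κ q then 1 else 0)
        (finSumFinEquiv.symm c)

/-- Block-diagonal concatenation `diag(U₁, U₂)` of rectangular matrices. -/
def blockDiag {u₁ u₂ a b : ℕ} (U₁ : Matrix (Fin u₁) (Fin a) ℕ)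
    (U₂ : Matrix (Fin u₂) (Fin b) ℕ) : Matrix (Fin (u₁ + u₂)) (Fin (a + b)) ℕ :=
  Matrix.reindex finSumFinEquiv finSumFinEquiv (Matrix.fromBlocks U₁ 0 0 U₂)

/-- The factorial `U!` of a brew matrix: the product of the factorials of the parts of
its corresponding composition (the parts are the row sums). -/
def brewFact {v ℓ : ℕ} (M : Matrix (Fin v) (Fin ℓ) ℕ) : ℕ :=
  ∏ i : Fin v, Nat.factorial (∑ j : Fin ℓ, M i j)

/-- The image of `N_j : brew(j,a+b) × SH(a,b) → ℕ₀^{j×(a+b)}`, `(U,P) ↦ U·P`. -/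
def NIm (a b j : ℕ) : Set (Matrix (Fin j) (Fin (a + b)) ℕ) :=
  {W | ∃ U P, IsBrew U ∧ IsSH P ∧ W = U * P}

/-- The image of `M_{u₁,u₂,j} : QSH(u₁,u₂;j) × brew(u₁,a) × brew(u₂,b) → ℕ₀^{j×(a+b)}`,
`(A,U₁,U₂) ↦ A · diag(U₁,U₂)`. -/
def MIm (a b j u₁ u₂ : ℕ) : Set (Matrix (Fin j) (Fin (a + b)) ℕ) :=
  {W | ∃ (A : Matrix (Fin j) (Fin (u₁ + u₂)) ℕ) (U₁ : Matrix (Fin u₁) (Fin a) ℕ)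
        (U₂ : Matrix (Fin u₂) (Fin b) ℕ),
      IsQSH A ∧ IsBrew U₁ ∧ IsBrew U₂ ∧ W = A * blockDiag U₁ U₂}

namespace ShufProof

def OH {n m : ℕ} (f : Fin m → Fin n) : Matrix (Fin n) (Fin m) ℕ :=
  Matrix.of fun i c => if i = f c then 1 else 0

lemma OH_mul_OH {n m l : ℕ} (f : Fin m → Fin n) (g : Fin l → Fin m) :
    OH f * OH g = OH (fun c => f (g c)) := by
  ext i c
  simp only [Matrix.mul_apply, OH, Matrix.of_apply]
  rw [Finset.sum_eq_single (g c)]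
  · simp
  · intro k _ hk; simp [hk]
  · simp

lemma OH_inj {n m : ℕ} {f f' : Fin m → Fin n} (h : OH f = OH f') : f = f' := by
  funext c
  by_contra hc
  have : OH f (f c) c = OH f' (f c) c := by rw [h]
  simp only [OH, Matrix.of_apply] at this
  simp [hc] at this

lemma elim_ite {α β : Type*} {j : ℕ} (ι : α → Fin j) (κ : β → Fin j) (r : Fin j) :
    ∀ x : α ⊕ β,
      Sum.elim (fun p => if r = ι p then (1:ℕ) else 0) (fun q => if r = κ q then 1 else 0) x
        = if r = Sum.elim ι κ x then 1 else 0 := by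
  rintro (p | q) <;> rfl

lemma of_elim_eq_OH {α β : Type*} [Fintype α] [Fintype β] {j m : ℕ}
    (ι : α → Fin j) (κ : β → Fin j) (e : Fin m ≃ (α ⊕ β)) :
    (Matrix.of fun (r : Fin j) (c : Fin m) =>
      Sum.elim (fun p => if r = ι p then (1:ℕ) else 0) (fun q => if r = κ q then 1 else 0)
        (e c)) = OH (fun c => Sum.elim ι κ (e c)) := by
  ext r c
  simp only [Matrix.of_apply, OH]
  exact elim_ite ι κ r (e c)

lemma isBrew_iff {v l : ℕ} (M : Matrix (Fin v) (Fin l) ℕ) :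
    IsBrew M ↔ ∃ μ : Fin l → Fin v, Monotone μ ∧ Function.Surjective μ ∧ M = OH μ := by
  constructor
  · rintro ⟨μ, h1, h2, _, h4⟩; exact ⟨μ, h1, h2, h4⟩
  · rintro ⟨μ, h1, h2, h4⟩
    refine ⟨μ, h1, h2, ?_, h4⟩
    intro t ht
    by_contra hlt
    push_neg at hlt
    set i := μ ⟨t, Nat.lt_of_succ_lt ht⟩ with hi
    set i' := μ ⟨t+1, ht⟩ with hi'
    have hiv : (i:ℕ) + 1 < v := lt_trans hlt i'.isLt
    obtain ⟨s, hs⟩ := h2 ⟨(i:ℕ)+1, hiv⟩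
    rcases le_or_gt s ⟨t, Nat.lt_of_succ_lt ht⟩ with hle | hgt
    · have := h1 hle
      rw [hs] at this
      have : (i:ℕ) + 1 ≤ (i:ℕ) := this
      omega
    · have hle2 : (⟨t+1, ht⟩ : Fin l) ≤ s := hgt
      have := h1 hle2
      rw [hs] at this
      have : (i':ℕ) ≤ (i:ℕ)+1 := this
      omega


lemma mono_decomp {a j : ℕ} (g : Fin a → Fin j) (hg : Monotone g) :
    ∃ (u : ℕ) (ι' : Fin u → Fin j) (μ : Fin a → Fin u),
      StrictMono ι' ∧ Monotone μ ∧ Function.Surjective μ ∧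
      (∀ p, ι' (μ p) = g p) ∧ Set.range ι' = Set.range g := by
  classical
  set s : Finset (Fin j) := Finset.univ.image g with hs
  have hmemg : ∀ p, g p ∈ s := fun p => by simp [hs]
  refine ⟨s.card, s.orderEmbOfFin rfl,
    fun p => (s.orderIsoOfFin rfl).symm ⟨g p, hmemg p⟩, ?_, ?_, ?_, ?_, ?_⟩
  · exact (s.orderEmbOfFin rfl).strictMono
  · intro p p' hpp
    exact (s.orderIsoOfFin rfl).symm.monotone (Subtype.mk_le_mk.mpr (hg hpp))
  · intro q
    have hmem : (s.orderIsoOfFin rfl q : Fin j) ∈ s := (s.orderIsoOfFin rfl q).2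
    obtain ⟨p, -, hp⟩ := Finset.mem_image.mp hmem
    refine ⟨p, ?_⟩
    exact (s.orderIsoOfFin rfl).symm_apply_eq.mpr (Subtype.ext hp)
  · intro p
    have : (s.orderIsoOfFin rfl) ((s.orderIsoOfFin rfl).symm ⟨g p, hmemg p⟩)
        = ⟨g p, hmemg p⟩ := OrderIso.apply_symm_apply _ _
    exact congrArg Subtype.val this
  · rw [Finset.range_orderEmbOfFin]
    simp [hs]

lemma merge {a b j : ℕ} (hab : 0 < a + b) (g : Fin a → Fin j) (h : Fin b → Fin j)
    (hg : Monotone g) (hh : Monotone h) :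
    ∃ (ι : Fin a → Fin (a+b)) (κ : Fin b → Fin (a+b)) (μ : Fin (a+b) → Fin j),
      StrictMono ι ∧ StrictMono κ ∧ Function.Bijective (Sum.elim ι κ) ∧ Monotone μ ∧
      (∀ x, μ (Sum.elim ι κ x) = Sum.elim g h x) ∧
      Set.range μ = Set.range g ∪ Set.range h := by
  classical
  set n := a + b with hn
  set F : Fin a ⊕ Fin b → Fin j := Sum.elim g h with hF
  set key : Fin a ⊕ Fin b → ℕ :=
    Sum.elim (fun p => 2*n*(g p : ℕ) + (p : ℕ)) (fun q => 2*n*(h q : ℕ) + n + (q : ℕ)) with hkey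
  have h2n : 0 < 2*n := by omega
  have hkeyF : ∀ x, key x / (2*n) = ((F x : Fin j) : ℕ) := by
    rintro (p | q)
    · show (2*n*(g p : ℕ) + (p : ℕ)) / (2*n) = ((g p : Fin j) : ℕ)
      rw [Nat.mul_add_div h2n, Nat.div_eq_of_lt (by have := p.isLt; omega)]
      omega
    · show (2*n*(h q : ℕ) + n + (q : ℕ)) / (2*n) = ((h q : Fin j) : ℕ)
      rw [Nat.add_assoc, Nat.mul_add_div h2n, Nat.div_eq_of_lt (by have := q.isLt; omega)]
      omega
  have hkeymod : ∀ x, key x % (2*n) = Sum.elim (fun p : Fin a => (p : ℕ)) (fun q : Fin b => n + (q : ℕ)) x := by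
    rintro (p | q)
    · show (2*n*(g p : ℕ) + (p : ℕ)) % (2*n) = (p : ℕ)
      rw [Nat.mul_add_mod]
      exact Nat.mod_eq_of_lt (by have := p.isLt; omega)
    · show (2*n*(h q : ℕ) + n + (q : ℕ)) % (2*n) = n + (q : ℕ)
      rw [Nat.add_assoc, Nat.mul_add_mod]
      exact Nat.mod_eq_of_lt (by have := q.isLt; omega)
  have hkeyinj : Function.Injective key := by
    rintro x y hxy
    have hm : key x % (2*n) = key y % (2*n) := by rw [hxy]
    rw [hkeymod x, hkeymod y] at hm
    rcases x with p | q <;> rcases y with p' | q' <;> simp only [Sum.elim_inl, Sum.elim_inr] at hm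
    · exact congrArg Sum.inl (Fin.ext hm)
    · exfalso; have := p.isLt; omega
    · exfalso; have := p'.isLt; omega
    · exact congrArg Sum.inr (Fin.ext (by omega))
  set K : Fin n → ℕ := fun c => key (finSumFinEquiv.symm c) with hK
  have hKinj : Function.Injective K := fun c c' hcc =>
    finSumFinEquiv.symm.injective (hkeyinj hcc)
  set σ : Equiv.Perm (Fin n) := Tuple.sort K with hσ
  have hmonoS : Monotone (fun t => K (σ t)) := Tuple.monotone_sort K
  have hS : StrictMono (fun t => K (σ t)) :=
    hmonoS.strictMono_of_injective (hKinj.comp σ.injective)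
  refine ⟨fun p => σ.symm (finSumFinEquiv (Sum.inl p)),
    fun q => σ.symm (finSumFinEquiv (Sum.inr q)),
    fun t => F (finSumFinEquiv.symm (σ t)), ?_, ?_, ?_, ?_, ?_, ?_⟩
  · intro p p' hpp
    have hk : key (Sum.inl p) < key (Sum.inl p') := by
      have h1 : (g p : ℕ) ≤ (g p' : ℕ) := hg hpp.le
      have h2 : 2*n*(g p : ℕ) ≤ 2*n*(g p' : ℕ) := Nat.mul_le_mul_left _ h1
      show 2*n*(g p : ℕ) + (p : ℕ) < 2*n*(g p' : ℕ) + (p' : ℕ)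
      have h3 := Fin.lt_def.mp hpp
      omega
    have hlt : K (σ (σ.symm (finSumFinEquiv (Sum.inl p))))
        < K (σ (σ.symm (finSumFinEquiv (Sum.inl p')))) := by
      simpa [hK, Equiv.apply_symm_apply, Equiv.symm_apply_apply] using hk
    exact hS.lt_iff_lt.mp hlt
  · intro q q' hqq
    have hk : key (Sum.inr q) < key (Sum.inr q') := by
      have h1 : (h q : ℕ) ≤ (h q' : ℕ) := hh hqq.le
      have h2 : 2*n*(h q : ℕ) ≤ 2*n*(h q' : ℕ) := Nat.mul_le_mul_left _ h1
      show 2*n*(h q : ℕ) + n + (q : ℕ) < 2*n*(h q' : ℕ) + n + (q' : ℕ)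
      have h3 := Fin.lt_def.mp hqq
      omega
    have hlt : K (σ (σ.symm (finSumFinEquiv (Sum.inr q))))
        < K (σ (σ.symm (finSumFinEquiv (Sum.inr q')))) := by
      simpa [hK, Equiv.apply_symm_apply, Equiv.symm_apply_apply] using hk
    exact hS.lt_iff_lt.mp hlt
  · have hE : (Sum.elim (fun p => σ.symm (finSumFinEquiv (Sum.inl p)))
        (fun q => σ.symm (finSumFinEquiv (Sum.inr q))))
        = fun x => σ.symm (finSumFinEquiv x) := by
      funext x; cases x <;> rfl
    rw [hE]
    exact (finSumFinEquiv.trans (σ.symm : Fin n ≃ Fin n)).bijective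
  · intro t t' htt
    have h1 : K (σ t) ≤ K (σ t') := hmonoS htt
    have h2 : key (finSumFinEquiv.symm (σ t)) ≤ key (finSumFinEquiv.symm (σ t')) := h1
    have h3 : key (finSumFinEquiv.symm (σ t)) / (2*n)
        ≤ key (finSumFinEquiv.symm (σ t')) / (2*n) := Nat.div_le_div_right h2
    rw [hkeyF, hkeyF] at h3
    exact Fin.le_def.mpr h3
  · rintro (p | q) <;>
      simp [Equiv.apply_symm_apply, Equiv.symm_apply_apply, hF]
  · have hco : (fun t => F (finSumFinEquiv.symm (σ t)))
        = F ∘ (fun t => finSumFinEquiv.symm (σ t)) := rfl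
    have hsurj : Function.Surjective (fun t => finSumFinEquiv.symm (σ t)) :=
      finSumFinEquiv.symm.surjective.comp σ.surjective
    rw [hco, Function.Surjective.range_comp hsurj, hF, Set.Sum.elim_range]


lemma elim_map {α β γ δ ε : Type*} (ι : γ → ε) (κ : δ → ε) (μ₁ : α → γ) (μ₂ : β → δ) :
    ∀ y : α ⊕ β, Sum.elim ι κ (Sum.map μ₁ μ₂ y)
      = Sum.elim (fun p => ι (μ₁ p)) (fun q => κ (μ₂ q)) y := by
  rintro (p | q) <;> rfl

lemma elim_comp {α β γ ε : Type*} (μ : γ → ε) (ι : α → γ) (κ : β → γ) :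
    ∀ y : α ⊕ β, μ (Sum.elim ι κ y) = Sum.elim (fun p => μ (ι p)) (fun q => μ (κ q)) y := by
  rintro (p | q) <;> rfl

lemma blockDiag_OH {u₁ u₂ a b : ℕ} (μ₁ : Fin a → Fin u₁) (μ₂ : Fin b → Fin u₂) :
    blockDiag (OH μ₁) (OH μ₂)
      = OH (fun c => finSumFinEquiv (Sum.map μ₁ μ₂ (finSumFinEquiv.symm c))) := by
  ext r c
  obtain ⟨x, rfl⟩ := finSumFinEquiv.surjective r
  obtain ⟨y, rfl⟩ := finSumFinEquiv.surjective c
  simp only [blockDiag, Matrix.reindex_apply, Matrix.submatrix_apply, Equiv.symm_apply_apply,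
    OH, Matrix.of_apply]
  cases x <;> cases y <;>
    simp only [Matrix.fromBlocks_apply₁₁, Matrix.fromBlocks_apply₁₂, Matrix.fromBlocks_apply₂₁,
      Matrix.fromBlocks_apply₂₂, Matrix.zero_apply, Sum.map_inl, Sum.map_inr, finSumFinEquiv,
      Equiv.coe_fn_mk, Fin.addCases]
  · simp [Fin.ext_iff]
  · rw [if_neg (by simp [Fin.ext_iff]; omega)]
  · rw [if_neg (by simp [Fin.ext_iff]; omega)]
  · simp [Fin.ext_iff, Nat.add_right_inj]

lemma mem_MIm_char {a b j u₁ u₂ : ℕ} {W : Matrix (Fin j) (Fin (a + b)) ℕ} :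
    W ∈ MIm a b j u₁ u₂ ↔ ∃ (g : Fin a → Fin j) (h : Fin b → Fin j),
      Monotone g ∧ Monotone h ∧ Set.range g ∪ Set.range h = Set.univ ∧
      Nat.card (Set.range g) = u₁ ∧ Nat.card (Set.range h) = u₂ ∧
      W = OH (fun c => Sum.elim g h (finSumFinEquiv.symm c)) := by
  constructor
  · rintro ⟨A, U₁, U₂, ⟨ι', κ', hι', hκ', hsurj, hA⟩, hU₁, hU₂, hW⟩
    obtain ⟨μ₁, hμ₁m, hμ₁s, hU₁'⟩ := (isBrew_iff U₁).mp hU₁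
    obtain ⟨μ₂, hμ₂m, hμ₂s, hU₂'⟩ := (isBrew_iff U₂).mp hU₂
    rw [of_elim_eq_OH] at hA
    refine ⟨fun p => ι' (μ₁ p), fun q => κ' (μ₂ q), hι'.monotone.comp hμ₁m,
      hκ'.monotone.comp hμ₂m, ?_, ?_, ?_, ?_⟩
    · have h1 : Set.range (fun p => ι' (μ₁ p)) = Set.range ι' :=
        Function.Surjective.range_comp hμ₁s ι'
      have h2 : Set.range (fun q => κ' (μ₂ q)) = Set.range κ' :=
        Function.Surjective.range_comp hμ₂s κ'
      rw [h1, h2, ← Set.Sum.elim_range]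
      exact Set.range_eq_univ.mpr hsurj
    · have h1 : Set.range (fun p => ι' (μ₁ p)) = Set.range ι' :=
        Function.Surjective.range_comp hμ₁s ι'
      rw [h1, Nat.card_range_of_injective hι'.injective, Nat.card_eq_fintype_card,
        Fintype.card_fin]
    · have h2 : Set.range (fun q => κ' (μ₂ q)) = Set.range κ' :=
        Function.Surjective.range_comp hμ₂s κ'
      rw [h2, Nat.card_range_of_injective hκ'.injective, Nat.card_eq_fintype_card,
        Fintype.card_fin]
    · rw [hW, hA, hU₁', hU₂', blockDiag_OH, OH_mul_OH]
      exact congrArg OH (funext fun c => by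
        rw [Equiv.symm_apply_apply]; exact elim_map ι' κ' μ₁ μ₂ _)
  · rintro ⟨g, h, hg, hh, hcover, hcg, hch, hW⟩
    obtain ⟨u, ι', μ₁, hι', hμ₁m, hμ₁s, hcomp₁, hrange₁⟩ := mono_decomp g hg
    obtain ⟨u', κ', μ₂, hκ', hμ₂m, hμ₂s, hcomp₂, hrange₂⟩ := mono_decomp h hh
    have hu : u₁ = u := by
      rw [← hcg, ← hrange₁, Nat.card_range_of_injective hι'.injective,
        Nat.card_eq_fintype_card, Fintype.card_fin]
    have hu' : u₂ = u' := by
      rw [← hch, ← hrange₂, Nat.card_range_of_injective hκ'.injective,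
        Nat.card_eq_fintype_card, Fintype.card_fin]
    subst hu hu'
    have hsurj : Function.Surjective (Sum.elim ι' κ') := by
      intro x
      have hx : x ∈ Set.range g ∪ Set.range h := hcover ▸ Set.mem_univ x
      rcases hx with ⟨p, hp⟩ | ⟨q, hq⟩
      · exact ⟨Sum.inl (μ₁ p), by simp [hcomp₁ p, hp]⟩
      · exact ⟨Sum.inr (μ₂ q), by simp [hcomp₂ q, hq]⟩
    refine ⟨OH (fun c => Sum.elim ι' κ' (finSumFinEquiv.symm c)), OH μ₁, OH μ₂,
      ⟨ι', κ', hι', hκ', hsurj, (of_elim_eq_OH ι' κ' finSumFinEquiv.symm).symm⟩,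
      (isBrew_iff _).mpr ⟨μ₁, hμ₁m, hμ₁s, rfl⟩,
      (isBrew_iff _).mpr ⟨μ₂, hμ₂m, hμ₂s, rfl⟩, ?_⟩
    have helim : ∀ y : Fin a ⊕ Fin b, Sum.elim g h y
        = Sum.elim (fun p => ι' (μ₁ p)) (fun q => κ' (μ₂ q)) y := by
      rintro (p | q) <;> simp [hcomp₁, hcomp₂]
    rw [hW, blockDiag_OH, OH_mul_OH]
    exact congrArg OH (funext fun c => by
      rw [Equiv.symm_apply_apply, elim_map]; exact helim _)

lemma mem_NIm_char {a b j : ℕ} (hab : 0 < a + b) {W : Matrix (Fin j) (Fin (a + b)) ℕ} :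
    W ∈ NIm a b j ↔ ∃ (g : Fin a → Fin j) (h : Fin b → Fin j),
      Monotone g ∧ Monotone h ∧ Set.range g ∪ Set.range h = Set.univ ∧
      W = OH (fun c => Sum.elim g h (finSumFinEquiv.symm c)) := by
  constructor
  · rintro ⟨U, P, hU, ⟨ι, κ, hι, hκ, hbij, hP⟩, hW⟩
    obtain ⟨μ, hμm, hμs, hU'⟩ := (isBrew_iff U).mp hU
    rw [of_elim_eq_OH] at hP
    refine ⟨fun p => μ (ι p), fun q => μ (κ q), hμm.comp hι.monotone, hμm.comp hκ.monotone,
      ?_, ?_⟩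
    · rw [Set.eq_univ_iff_forall]
      intro x
      obtain ⟨y, hy⟩ := hμs x
      obtain ⟨z, hz⟩ := hbij.surjective y
      rcases z with p | q
      · exact Set.mem_union_left _ ⟨p, by show μ (ι p) = x; rw [show ι p = y from hz, hy]⟩
      · exact Set.mem_union_right _ ⟨q, by show μ (κ q) = x; rw [show κ q = y from hz, hy]⟩
    · rw [hW, hU', hP]; refine (OH_mul_OH _ _).trans ?_
      exact congrArg OH (funext fun c => elim_comp μ ι κ (finSumFinEquiv.symm c))
  · rintro ⟨g, h, hg, hh, hcover, hW⟩
    obtain ⟨ι, κ, μ, hι, hκ, hbij, hμm, hcomp, hrange⟩ := merge hab g h hg hh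
    have hμs : Function.Surjective μ := Set.range_eq_univ.mp (by rw [hrange, hcover])
    refine ⟨OH μ, OH (fun c => Sum.elim ι κ (finSumFinEquiv.symm c)),
      (isBrew_iff _).mpr ⟨μ, hμm, hμs, rfl⟩,
      ⟨ι, κ, hι, hκ, hbij, (of_elim_eq_OH ι κ finSumFinEquiv.symm).symm⟩, ?_⟩
    rw [hW]; refine Eq.trans ?_ (OH_mul_OH _ _).symm
    exact congrArg OH (funext fun c => (hcomp (finSumFinEquiv.symm c)).symm)

end ShufProof

/-- the image of `N_j` is the disjoint union over `u₁, u₂ ∈ ℕ` of the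
images of the maps `M_{u₁,u₂,j}`. -/
theorem NIm_eq_disjoint_union_MIm (a b j : ℕ) (ha : 0 < a) (hb : 0 < b) (hj : 0 < j) :
    (NIm a b j = ⋃ (u₁ : ℕ) (u₂ : ℕ), MIm a b j u₁ u₂) ∧
    (∀ u₁ u₂ u₁' u₂' : ℕ, (u₁, u₂) ≠ (u₁', u₂') →
      Disjoint (MIm a b j u₁ u₂) (MIm a b j u₁' u₂')) := by
  have hab : 0 < a + b := by omega
  constructor
  · ext W
    simp only [Set.mem_iUnion]
    constructor
    · intro hW
      obtain ⟨g, h, hg, hh, hcover, hWeq⟩ := (ShufProof.mem_NIm_char hab).mp hW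
      exact ⟨Nat.card (Set.range g), Nat.card (Set.range h),
        ShufProof.mem_MIm_char.mpr ⟨g, h, hg, hh, hcover, rfl, rfl, hWeq⟩⟩
    · rintro ⟨u₁, u₂, hW⟩
      obtain ⟨g, h, hg, hh, hcover, -, -, hWeq⟩ := ShufProof.mem_MIm_char.mp hW
      exact (ShufProof.mem_NIm_char hab).mpr ⟨g, h, hg, hh, hcover, hWeq⟩
  · intro u₁ u₂ u₁' u₂' hne
    rw [Set.disjoint_left]
    intro W h1 h2
    obtain ⟨g, h, -, -, -, hc1, hc2, hWeq⟩ := ShufProof.mem_MIm_char.mp h1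
    obtain ⟨g', h', -, -, -, hc1', hc2', hWeq'⟩ := ShufProof.mem_MIm_char.mp h2
    have hfun := ShufProof.OH_inj (hWeq.symm.trans hWeq')
    have hgg : g = g' := by
      funext p
      have := congrFun hfun (finSumFinEquiv (Sum.inl p))
      simpa using this
    have hhh : h = h' := by
      funext q
      have := congrFun hfun (finSumFinEquiv (Sum.inr q))
      simpa using this
    apply hne
    rw [← hc1, ← hc2, ← hc1', ← hc2', hgg, hhh]
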